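/- Let b : Fin 5 → ℝ be the bandwidths b 0 = b 1 = 7/20, b 2 = b 3 = 9/20 and b 4 = 3/10, and let r₀ : Fin 4 → Fin 2 be the symmetric assignment r₀ 0 = r₀ 2 = 0 and r₀ 1 = r₀ 3 = 1 of the first four flows. Then: (a) r₀ is feasible; (b) there exists a feasible assignment of all five flows; but (c) for every assignment r : Fin 4 → Fin 2 reachable from r₀ by single-flow reroute steps and every edge e : Fin 2, the extension of r that places flow 4 on edge e is not feasible. Hence the new flow can only be accommodated by simultaneously rerouting two flows (a flow swap), never by any sequence of feasibility-preserving single-flow reroutes. -/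

import Mathlib

open Finset

/-- The load on edge `e`: the sum of the bandwidths of the flows assigned to `e`. -/
noncomputable def load {ι : Type*} [Fintype ι] {m : ℕ} (b : ι → ℝ) (r : ι → Fin m)
    (e : Fin m) : ℝ :=
  ∑ i ∈ univ.filter (fun i => r i = e), b i

/-- An assignment is feasible if the load of every edge is at most the capacity 1. -/
def Feasible {ι : Type*} [Fintype ι] {m : ℕ} (b : ι → ℝ) (r : ι → Fin m) : Prop :=
  ∀ e, load b r e ≤ 1

/-- A single-flow reroute step: `r'` is feasible and differs from `r` at exactly one index. -/
def Step {ι : Type*} [Fintype ι] {m : ℕ} (b : ι → ℝ) (r r' : ι → Fin m) : Prop :=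
  Feasible b r' ∧ ∃! i, r' i ≠ r i

/-- `r'` is reachable from a feasible `r` by a sequence of single-flow reroute steps. -/
def Reachable {ι : Type*} [Fintype ι] {m : ℕ} (b : ι → ℝ) (r r' : ι → Fin m) : Prop :=
  Feasible b r ∧ Relation.ReflTransGen (Step b) r r'

/-- The bandwidths of the five flows. -/
noncomputable def b : Fin 5 → ℝ := ![7/20, 7/20, 9/20, 9/20, 3/10]

/-- The bandwidths of the first four flows. -/
noncomputable def b4 : Fin 4 → ℝ := fun i => b i.castSucc

/-- The symmetric assignment of the first four flows. -/
def r₀ : Fin 4 → Fin 2 := ![0, 1, 0, 1]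

lemma load4_eq (r : Fin 4 → Fin 2) (e : Fin 2) :
    load b4 r e = (if r 0 = e then (7:ℝ)/20 else 0) + (if r 1 = e then (7:ℝ)/20 else 0)
      + (if r 2 = e then (9:ℝ)/20 else 0) + (if r 3 = e then (9:ℝ)/20 else 0) := by
  have h0 : b4 0 = 7/20 := rfl
  have h1 : b4 1 = 7/20 := rfl
  have h2 : b4 2 = 9/20 := rfl
  have h3 : b4 3 = 9/20 := rfl
  simp [load, Finset.sum_filter, Fin.sum_univ_four, h0, h1, h2, h3]

lemma load5_eq (r : Fin 5 → Fin 2) (e : Fin 2) :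
    load b r e = (if r 0 = e then (7:ℝ)/20 else 0) + (if r 1 = e then (7:ℝ)/20 else 0)
      + (if r 2 = e then (9:ℝ)/20 else 0) + (if r 3 = e then (9:ℝ)/20 else 0)
      + (if r 4 = e then (3:ℝ)/10 else 0) := by
  have h0 : b 0 = 7/20 := rfl
  have h1 : b 1 = 7/20 := rfl
  have h2 : b 2 = 9/20 := rfl
  have h3 : b 3 = 9/20 := rfl
  have h4 : b 4 = 3/10 := rfl
  simp [load, Finset.sum_filter, Fin.sum_univ_five, h0, h1, h2, h3, h4]

lemma no_step (r' : Fin 4 → Fin 2) : ¬ Step b4 r₀ r' := by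
  rintro ⟨hf, i, hi, huniq⟩
  have hj : ∀ j, j ≠ i → r' j = r₀ j := by
    intro j hji
    by_contra h
    exact hji (huniq j h)
  fin_cases i
  · have e0 : r' 0 = 1 := by simp only [r₀, show (⟨0, by omega⟩ : Fin 4) = 0 from rfl,
      Matrix.cons_val_zero] at hi; omega
    have h := hf 1
    rw [load4_eq, e0, hj 1 (by decide), hj 2 (by decide), hj 3 (by decide)] at h
    norm_num [r₀, Matrix.cons_val_two, Matrix.cons_val_three] at h
  · have e0 : r' 1 = 0 := by simp only [r₀, show (⟨1, by omega⟩ : Fin 4) = 1 from rfl,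
      Matrix.cons_val_one, Matrix.head_cons, Matrix.cons_val_zero] at hi; omega
    have h := hf 0
    rw [load4_eq, e0, hj 0 (by decide), hj 2 (by decide), hj 3 (by decide)] at h
    norm_num [r₀, Matrix.cons_val_two, Matrix.cons_val_three] at h
  · have e0 : r' 2 = 1 := by
      have h1 : r' 2 ≠ r₀ 2 := hi
      have h2 : r₀ 2 = 0 := rfl
      omega
    have h := hf 1
    rw [load4_eq, e0, hj 0 (by decide), hj 1 (by decide), hj 3 (by decide)] at h
    norm_num [r₀, Matrix.cons_val_two, Matrix.cons_val_three] at h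
  · have e0 : r' 3 = 0 := by
      have h1 : r' 3 ≠ r₀ 3 := hi
      have h2 : r₀ 3 = 1 := rfl
      omega
    have h := hf 0
    rw [load4_eq, e0, hj 0 (by decide), hj 1 (by decide), hj 2 (by decide)] at h
    norm_num [r₀, Matrix.cons_val_two, Matrix.cons_val_three] at h

theorem stmt3 :
    Feasible b4 r₀ ∧
    (∃ r : Fin 5 → Fin 2, Feasible b r) ∧
    ∀ r : Fin 4 → Fin 2, Reachable b4 r₀ r →
      ∀ e : Fin 2, ¬ Feasible b (Fin.snoc r e) := by
  refine ⟨?_, ⟨![0, 0, 1, 1, 0], ?_⟩, ?_⟩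
  · intro e
    rw [load4_eq]
    fin_cases e <;> norm_num [r₀, Matrix.cons_val_two, Matrix.cons_val_three]
  · intro e
    rw [load5_eq]
    fin_cases e <;> norm_num [Matrix.cons_val_two, Matrix.cons_val_three, Matrix.cons_val_four]
  · rintro r ⟨-, hrtg⟩ e hf
    have hr : r = r₀ := by
      rcases Relation.ReflTransGen.cases_head hrtg with h | ⟨c, hc, -⟩
      · exact h.symm
      · exact absurd hc (no_step c)
    subst hr
    have he : e = 0 ∨ e = 1 := by omega
    rcases he with rfl | rfl
    · have h := hf 0
      rw [load5_eq, show (Fin.snoc r₀ (0:Fin 2) : Fin 5 → Fin 2) 0 = 0 from rfl,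
        show (Fin.snoc r₀ (0:Fin 2) : Fin 5 → Fin 2) 1 = 1 from rfl,
        show (Fin.snoc r₀ (0:Fin 2) : Fin 5 → Fin 2) 2 = 0 from rfl,
        show (Fin.snoc r₀ (0:Fin 2) : Fin 5 → Fin 2) 3 = 1 from rfl,
        show (Fin.snoc r₀ (0:Fin 2) : Fin 5 → Fin 2) 4 = 0 from rfl] at h
      norm_num at h
    · have h := hf 1
      rw [load5_eq, show (Fin.snoc r₀ (1:Fin 2) : Fin 5 → Fin 2) 0 = 0 from rfl,
        show (Fin.snoc r₀ (1:Fin 2) : Fin 5 → Fin 2) 1 = 1 from rfl,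
        show (Fin.snoc r₀ (1:Fin 2) : Fin 5 → Fin 2) 2 = 0 from rfl,
        show (Fin.snoc r₀ (1:Fin 2) : Fin 5 → Fin 2) 3 = 1 from rfl,
        show (Fin.snoc r₀ (1:Fin 2) : Fin 5 → Fin 2) 4 = 1 from rfl] at h
      norm_num at h
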